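/- If m is a starter with m > 1, squarefull part s satisfying P⁺(m)² ∤ m, and a = α(m), then q = a + 2 is prime, q divides m, and in fact q² divides m. -/

import Mathlib

open Pointwise

/-- The set of all subset sums of `{φ(d) : d ∣ n}`. -/
def SubsetSums (n : ℕ) : Set ℕ :=
  {k | ∃ D : Finset ℕ, D ⊆ n.divisors ∧ k = ∑ d ∈ D, Nat.totient d}

/-- `n` is `φ`-practical if every integer in `{0, 1, ..., n}` is a subset sum of
the totients of the divisors of `n`. -/
def PhiPractical (n : ℕ) : Prop := 0 < n ∧ SubsetSums n = Set.Iic n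

/-- The largest prime factor of `n` (junk value `0` if `n ≤ 1`). -/
def Pplus (n : ℕ) : ℕ := n.primeFactors.sup id

/-- `d` is an initial divisor of `n`: `d ∣ n` and every prime factor of `d` is
smaller than every prime factor of `n / d`. -/
def InitialDivisor (d n : ℕ) : Prop :=
  d ∣ n ∧ ∀ p ∈ d.primeFactors, ∀ q ∈ (n / d).primeFactors, p < q

/-- A positive integer is squarefull if `p² ∣ s` for every prime `p ∣ s`. -/
def IsSquarefull (s : ℕ) : Prop := ∀ p : ℕ, p.Prime → p ∣ s → p ^ 2 ∣ s

/-- `s` is the squarefull part of `m`: the largest squarefull divisor of `m`. -/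
def IsSquarefullPart (s m : ℕ) : Prop :=
  s ∣ m ∧ IsSquarefull s ∧ ∀ t, t ∣ m → IsSquarefull t → t ≤ s

/-- A starter is a `φ`-practical `m` such that either `m / P⁺(m)` is not
`φ`-practical or `P⁺(m)² ∣ m`. -/
def Starter (m : ℕ) : Prop :=
  PhiPractical m ∧ (¬ PhiPractical (m / Pplus m) ∨ Pplus m ^ 2 ∣ m)

/-- `a = α(m)`: the largest proper initial divisor of `m` that is `φ`-practical. -/
def IsAlpha (a m : ℕ) : Prop :=
  InitialDivisor a m ∧ a < m ∧ PhiPractical a ∧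
    ∀ d, InitialDivisor d m → d < m → PhiPractical d → d ≤ a

lemma subsetSums_subset_Iic {n : ℕ} : SubsetSums n ⊆ Set.Iic n := by
  rintro k ⟨D, hD, rfl⟩
  have : ∑ d ∈ D, Nat.totient d ≤ ∑ d ∈ n.divisors, Nat.totient d :=
    Finset.sum_le_sum_of_subset hD
  simpa [Nat.sum_totient] using this

lemma mem_subsetSums_of_le {n k : ℕ} (h : PhiPractical n) (hk : k ≤ n) :
    ∃ D : Finset ℕ, D ⊆ n.divisors ∧ k = ∑ d ∈ D, Nat.totient d := by
  have : k ∈ SubsetSums n := by rw [h.2]; exact hk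
  exact this

lemma phiPractical_of {n : ℕ} (hn : 0 < n)
    (h : ∀ k ≤ n, ∃ D : Finset ℕ, D ⊆ n.divisors ∧ k = ∑ d ∈ D, Nat.totient d) :
    PhiPractical n :=
  ⟨hn, Set.Subset.antisymm subsetSums_subset_Iic (fun k hk => h k hk)⟩

/-- Layer lemma: multiply a φ-practical number by one more power of a prime. -/
lemma phiPractical_step {t q e : ℕ} (ht : PhiPractical t) (hq : q.Prime)
    (hqt : ¬ q ∣ t) (hs : PhiPractical (t * q ^ e))
    (hL : q ^ e * (q - 1) ≤ t * q ^ e + 1) :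
    PhiPractical (t * q ^ (e + 1)) := by
  have ht0 : 0 < t := ht.1
  have hq0 : 0 < q := hq.pos
  have hq2 : 2 ≤ q := hq.two_le
  set L := q ^ e * (q - 1) with hLdef
  have hL0 : 0 < L := by
    have : 0 < q ^ e := Nat.pow_pos hq0
    have : 0 < q - 1 := by omega
    positivity
  refine phiPractical_of (by positivity) ?_
  intro k hk
  set c := min t (k / L) with hc
  have hcle : c ≤ t := min_le_left _ _
  have hcLk : c * L ≤ k := by
    calc c * L ≤ (k / L) * L := Nat.mul_le_mul_right L (min_le_right t (k / L))
    _ ≤ k := Nat.div_mul_le_self k L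
  set r := k - c * L with hr
  have hrk : r + c * L = k := Nat.sub_add_cancel hcLk
  have hkey : t * L + t * q ^ e = t * q ^ (e + 1) := by
    have hq1 : q - 1 + 1 = q := by omega
    calc t * (q ^ e * (q - 1)) + t * q ^ e = t * q ^ e * (q - 1 + 1) := by ring
    _ = t * q ^ e * q := by rw [hq1]
    _ = t * q ^ (e + 1) := by ring
  have hrle : r ≤ t * q ^ e := by
    rcases le_or_gt t (k / L) with h | h
    · have hct : c = t := min_eq_left h
      rw [hr, hct]
      rw [Nat.sub_le_iff_le_add]
      omega
    · have hceq : c = k / L := min_eq_right h.le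
      have hdm : k / L * L + k % L = k := Nat.div_add_mod' k L
      have hmod : k % L < L := Nat.mod_lt _ hL0
      rw [hr, hceq]
      omega
  obtain ⟨D', hD'sub, hD'sum⟩ := mem_subsetSums_of_le hs hrle
  obtain ⟨Dc, hDcsub, hDcsum⟩ := mem_subsetSums_of_le ht hcle
  have hne : t * q ^ (e + 1) ≠ 0 := by positivity
  have hdisj : Disjoint D' (Dc.image (· * q ^ (e + 1))) := by
    rw [Finset.disjoint_left]
    intro x hxD' hximg
    obtain ⟨d, hd, rfl⟩ := Finset.mem_image.mp hximg
    have hx1 : d * q ^ (e + 1) ∣ t * q ^ e := (Nat.mem_divisors.mp (hD'sub hxD')).1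
    have hx2 : q ^ (e + 1) ∣ t * q ^ e := dvd_trans (dvd_mul_left _ _) hx1
    have : q ^ e * q ∣ q ^ e * t := by
      rw [pow_succ] at hx2
      rwa [mul_comm t] at hx2
    have : q ∣ t := (mul_dvd_mul_iff_left (by positivity : q ^ e ≠ 0)).mp this
    exact hqt this
  refine ⟨D' ∪ Dc.image (· * q ^ (e + 1)), ?_, ?_⟩
  · apply Finset.union_subset
    · exact hD'sub.trans (Nat.divisors_subset_of_dvd hne
        (mul_dvd_mul_left t (pow_dvd_pow q (Nat.le_succ e))))
    · intro x hx
      obtain ⟨d, hd, rfl⟩ := Finset.mem_image.mp hx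
      have hdt : d ∣ t := (Nat.mem_divisors.mp (hDcsub hd)).1
      exact Nat.mem_divisors.mpr ⟨mul_dvd_mul hdt dvd_rfl, hne⟩
  · rw [Finset.sum_union hdisj]
    have hinj : Set.InjOn (· * q ^ (e + 1)) Dc := by
      intro x _ y _ hxy
      exact Nat.eq_of_mul_eq_mul_right (by positivity) hxy
    rw [Finset.sum_image hinj]
    have htot : ∀ d ∈ Dc, (d * q ^ (e + 1)).totient = d.totient * L := by
      intro d hd
      have hdt : d ∣ t := (Nat.mem_divisors.mp (hDcsub hd)).1
      have hcop : Nat.Coprime d (q ^ (e + 1)) := by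
        apply Nat.Coprime.pow_right
        exact (hq.coprime_iff_not_dvd.mpr (fun h => hqt (h.trans hdt))).symm
      rw [Nat.totient_mul hcop, Nat.totient_prime_pow hq (Nat.succ_pos e)]
      simp [hLdef]
    rw [Finset.sum_congr rfl htot, ← Finset.sum_mul, ← hDcsum, ← hD'sum, hrk]

lemma phiPractical_mul_prime_pow {t q : ℕ} (ht : PhiPractical t) (hq : q.Prime)
    (hqt : ¬ q ∣ t) (hle : q ≤ t + 1) (e : ℕ) : PhiPractical (t * q ^ e) := by
  induction e with
  | zero => simpa using ht
  | succ e ih =>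
      apply phiPractical_step ht hq hqt ih
      have : q - 1 ≤ t := by omega
      calc q ^ e * (q - 1) ≤ q ^ e * t := Nat.mul_le_mul_left _ this
      _ = t * q ^ e := mul_comm _ _
      _ ≤ t * q ^ e + 1 := Nat.le_succ _

lemma phiPractical_mul_prime {t q : ℕ} (ht : PhiPractical t) (hq : q.Prime)
    (hqt : ¬ q ∣ t) (hle : q ≤ t + 2) : PhiPractical (t * q) := by
  have := phiPractical_step (e := 0) ht hq hqt (by simpa using ht) (by simp only [pow_zero, one_mul, mul_one]; omega)
  simpa using this

lemma coprime_of_initial {a m : ℕ} (ha : InitialDivisor a m) (ha0 : 0 < a)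
    (hm0 : 0 < m) : Nat.Coprime a (m / a) := by
  by_contra h
  have hma0 : 0 < m / a := Nat.div_pos (Nat.le_of_dvd hm0 ha.1) ha0
  set g := Nat.gcd a (m / a) with hg
  have hg1 : g ≠ 1 := h
  have hp := Nat.minFac_prime hg1
  have hpa : g.minFac ∣ a := (Nat.minFac_dvd g).trans (Nat.gcd_dvd_left _ _)
  have hpm : g.minFac ∣ m / a := (Nat.minFac_dvd g).trans (Nat.gcd_dvd_right _ _)
  exact lt_irrefl _ (ha.2 _ (Nat.mem_primeFactors.mpr ⟨hp, hpa, ha0.ne'⟩) _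
    (Nat.mem_primeFactors.mpr ⟨hp, hpm, hma0.ne'⟩))

/-- Lemma A: the least prime factor of `m / a` is at most `a + 2`. -/
lemma minFac_div_le {m a : ℕ} (hm : PhiPractical m) (ha : InitialDivisor a m)
    (halt : a < m) (ha0 : 0 < a) : (m / a).minFac ≤ a + 2 := by
  have hm0 : 0 < m := hm.1
  have hdvd := ha.1
  have hma1 : m / a ≠ 1 := by
    intro h1
    have := Nat.div_mul_cancel hdvd
    rw [h1, one_mul] at this
    omega
  obtain ⟨D, hDsub, hDsum⟩ := mem_subsetSums_of_le hm (show a + 1 ≤ m by omega)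
  by_cases hcase : D ⊆ a.divisors
  · exfalso
    have h1 : ∑ d ∈ D, Nat.totient d ≤ ∑ d ∈ a.divisors, Nat.totient d :=
      Finset.sum_le_sum_of_subset hcase
    rw [Nat.sum_totient] at h1
    omega
  · obtain ⟨d, hdD, hdnot⟩ := Finset.not_subset.mp hcase
    have hdm : d ∣ m := (Nat.mem_divisors.mp (hDsub hdD)).1
    have hd0 : 0 < d := Nat.pos_of_mem_divisors (hDsub hdD)
    have hdna : ¬ d ∣ a := fun h => hdnot (Nat.mem_divisors.mpr ⟨h, ha0.ne'⟩)
    have hcop := coprime_of_initial ha ha0 hm0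
    have hnc : ¬ Nat.Coprime d (m / a) := by
      intro hco
      apply hdna
      have hdm' : d ∣ a * (m / a) := by rwa [Nat.mul_div_cancel' hdvd]
      exact hco.dvd_of_dvd_mul_right hdm'
    set g := Nat.gcd d (m / a) with hg
    have hp := Nat.minFac_prime (show g ≠ 1 from hnc)
    have hpd : g.minFac ∣ d := (Nat.minFac_dvd g).trans (Nat.gcd_dvd_left _ _)
    have hpma : g.minFac ∣ m / a := (Nat.minFac_dvd g).trans (Nat.gcd_dvd_right _ _)
    have hqp : (m / a).minFac ≤ g.minFac := Nat.minFac_le_of_dvd hp.two_le hpma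
    have htot : g.minFac - 1 ∣ d.totient := by
      have h2 := Nat.totient_dvd_of_dvd hpd
      rwa [Nat.totient_prime hp] at h2
    have htpos : 0 < d.totient := Nat.totient_pos.mpr hd0
    have hle1 : g.minFac - 1 ≤ d.totient := Nat.le_of_dvd htpos htot
    have hle2 : d.totient ≤ a + 1 := by
      have h3 := Finset.single_le_sum (f := Nat.totient)
        (fun i _ => Nat.zero_le _) hdD
      omega
    have := hp.two_le
    omega

theorem starter_alpha_add_two_prime_sq_dvd (m a : ℕ) (hm : Starter m) (hm1 : 1 < m)
    (hsq : ¬ Pplus m ^ 2 ∣ m) (ha : IsAlpha a m) :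
    (a + 2).Prime ∧ (a + 2) ∣ m ∧ (a + 2) ^ 2 ∣ m := by
  obtain ⟨hmP, hstart⟩ := hm
  have hstart' : ¬ PhiPractical (m / Pplus m) := hstart.resolve_right hsq
  obtain ⟨hainit, haltm, haP, hamax⟩ := ha
  have ha0 : 0 < a := haP.1
  have hm0 : 0 < m := hmP.1
  have hadvd : a ∣ m := hainit.1
  have hma0 : 0 < m / a := Nat.div_pos (Nat.le_of_dvd hm0 hadvd) ha0
  have hma1 : m / a ≠ 1 := by
    intro h1
    have := Nat.div_mul_cancel hadvd
    rw [h1, one_mul] at this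
    omega
  set q := (m / a).minFac with hqdef
  have hq : q.Prime := Nat.minFac_prime hma1
  have hqma : q ∣ m / a := Nat.minFac_dvd _
  have hmadvd : m / a ∣ m := Nat.div_dvd_of_dvd hadvd
  have hqm : q ∣ m := hqma.trans hmadvd
  have hcop : Nat.Coprime a (m / a) := coprime_of_initial hainit ha0 hm0
  have hqna : ¬ q ∣ a := by
    intro h
    have : q ∣ Nat.gcd a (m / a) := Nat.dvd_gcd h hqma
    rw [hcop] at this
    exact hq.one_lt.ne' (Nat.eq_one_of_dvd_one this)
  have hqa2 : q ≤ a + 2 := minFac_div_le hmP hainit haltm ha0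
  set e := m.factorization q with hedef
  have he1 : 1 ≤ e := hq.factorization_pos_of_dvd hm0.ne' hqm
  have hqedvd : q ^ e ∣ m := Nat.ordProj_dvd m q
  set b := a * q ^ e with hbdef
  have hcopaq : Nat.Coprime a (q ^ e) :=
    ((hq.coprime_iff_not_dvd.mpr hqna).symm.pow_right e)
  have hbdvd : b ∣ m := hcopaq.mul_dvd_of_dvd_of_dvd hadvd hqedvd
  have hqe1 : 1 < q ^ e := Nat.one_lt_pow (by omega : e ≠ 0) hq.one_lt
  have hab : a < b := by
    have : 0 < q ^ e := by positivity
    rw [hbdef]; nlinarith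
  -- q^e divides m / a
  have hqema : q ^ e ∣ m / a := by
    have h1 : q ^ e ∣ a * (m / a) := by rwa [Nat.mul_div_cancel' hadvd]
    exact hcopaq.symm.dvd_of_dvd_mul_left h1
  -- b is an initial divisor of m
  have hbpf : b.primeFactors = a.primeFactors ∪ {q} := by
    rw [hbdef, Nat.primeFactors_mul ha0.ne' (by positivity),
      Nat.primeFactors_pow q (by omega : e ≠ 0), hq.primeFactors]
  have hbinit : InitialDivisor b m := by
    refine ⟨hbdvd, ?_⟩
    intro p hp r hr
    obtain ⟨hrp, hrdvd, hrne⟩ := Nat.mem_primeFactors.mp hr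
    have hmb : m / b = m / a / q ^ e := by
      rw [hbdef, ← Nat.div_div_eq_div_mul]
    have hrma : r ∣ m / a := by
      have : m / a / q ^ e ∣ m / a := Nat.div_dvd_of_dvd hqema
      rw [hmb] at hrdvd
      exact hrdvd.trans this
    have hrq : r ≠ q := by
      intro hrq
      have hqb : q ∣ m / b := hrq ▸ hrdvd
      have hbqm : b * q ∣ m := (Nat.dvd_div_iff_mul_dvd hbdvd).mp hqb
      have hqe1dvd : q ^ (e + 1) ∣ m := by
        have h5 : q ^ (e + 1) ∣ b * q := ⟨a, by rw [hbdef, pow_succ]; ring⟩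
        exact h5.trans hbqm
      have := (hq.pow_dvd_iff_le_factorization hm0.ne').mp hqe1dvd
      omega
    have hrmapf : r ∈ (m / a).primeFactors :=
      Nat.mem_primeFactors.mpr ⟨hrp, hrma, hma0.ne'⟩
    have hqr : q < r := by
      have := Nat.minFac_le_of_dvd hrp.two_le hrma
      omega
    rw [hbpf] at hp
    rcases Finset.mem_union.mp hp with hp | hp
    · exact hainit.2 p hp r hrmapf
    · have : p = q := Finset.mem_singleton.mp hp
      omega
  have hble : b ≤ m := Nat.le_of_dvd hm0 hbdvd
  -- the key contradiction: b cannot be φ-practical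
  have hcontra : ¬ PhiPractical b := by
    intro hPb
    rcases lt_or_eq_of_le hble with hlt | heq
    · exact absurd (hamax b hbinit hlt hPb) (not_le.mpr hab)
    · -- b = m
      have hmpf : m.primeFactors = a.primeFactors ∪ {q} := by rw [← heq, hbpf]
      have hqpf : q ∈ m.primeFactors := Nat.mem_primeFactors.mpr ⟨hq, hqm, hm0.ne'⟩
      have hqmapf : q ∈ (m / a).primeFactors :=
        Nat.mem_primeFactors.mpr ⟨hq, hqma, hma0.ne'⟩
      have hPp : Pplus m = q := by
        apply le_antisymm
        · apply Finset.sup_le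
          intro p hp
          rw [hmpf] at hp
          rcases Finset.mem_union.mp hp with hp | hp
          · exact le_of_lt (hainit.2 p hp q hqmapf)
          · exact le_of_eq (Finset.mem_singleton.mp hp)
        · exact Finset.le_sup (f := id) hqpf
      have hee : e = 1 := by
        by_contra hne
        apply hsq
        rw [hPp]
        exact (pow_dvd_pow q (by omega : 2 ≤ e)).trans hqedvd
      have hmq : m / Pplus m = a := by
        rw [hPp, ← heq, hbdef, hee, pow_one, Nat.mul_div_cancel _ hq.pos]
      rw [hmq] at hstart'
      exact hstart' haP
  -- q = a + 2
  have hqeq : q = a + 2 := by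
    by_contra hne
    have hle : q ≤ a + 1 := by omega
    exact hcontra (phiPractical_mul_prime_pow haP hq hqna hle e)
  -- e ≥ 2
  have he2 : 2 ≤ e := by
    by_contra hlt
    have hee : e = 1 := by omega
    apply hcontra
    rw [hbdef, hee, pow_one]
    exact phiPractical_mul_prime haP hq hqna (by omega)
  have hq2m : q ^ 2 ∣ m := (pow_dvd_pow q he2).trans hqedvd
  rw [← hqeq]
  exact ⟨hq, hqm, hq2m⟩
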